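/- arXiv:1803.06486 — 7 statements merged into one kernel-verified Lean document; each statement's English description precedes it below -/
import Mathlib

section
/- Let f : ℝ → ℝ be positive and differentiable at r₀ > 0, let δ > 0 and ω ∈ ℝ, and define Ω(r) := 1/(1 - ω²·f(r)·r^(-2)), assuming 1 - ω²·f(r₀)·r₀^(-2) > 0. Then it is impossible that both (r^δ·Ω(r)^(-1))'(r₀) = 0 and (f(r)·Ω(r))'(r₀) = 0 hold simultaneously. -/
theorem stmt1 (f : ℝ → ℝ) (r₀ δ ω : ℝ) (hr : 0 < r₀) (hδ : 0 < δ)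
    (hfpos : ∀ x, 0 < f x) (hf : DifferentiableAt ℝ f r₀)
    (hΩ : 0 < 1 - ω ^ 2 * f r₀ * r₀ ^ (-2 : ℝ)) :
    ¬ (deriv (fun r => r ^ δ * (1 - ω ^ 2 * f r * r ^ (-2 : ℝ))) r₀ = 0 ∧
       deriv (fun r => f r * (1 - ω ^ 2 * f r * r ^ (-2 : ℝ))⁻¹) r₀ = 0) := by
  rintro ⟨h1, h2⟩
  set c := deriv f r₀ with hc
  have hf' : HasDerivAt f c r₀ := hf.hasDerivAt
  have hq : HasDerivAt (fun r : ℝ => r ^ (-2 : ℝ)) ((-2 : ℝ) * r₀ ^ ((-2 : ℝ) - 1)) r₀ :=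
    Real.hasDerivAt_rpow_const (Or.inl hr.ne')
  set G : ℝ := -(ω ^ 2 * c * r₀ ^ (-2 : ℝ) + ω ^ 2 * f r₀ * ((-2 : ℝ) * r₀ ^ ((-2 : ℝ) - 1)))
    with hG
  have hg : HasDerivAt (fun r => 1 - ω ^ 2 * f r * r ^ (-2 : ℝ)) G r₀ := by
    have h := (((hf'.const_mul (ω ^ 2)).mul hq).const_sub 1)
    exact h
  have hg₀ := hΩ
  set g₀ : ℝ := 1 - ω ^ 2 * f r₀ * r₀ ^ (-2 : ℝ) with hg₀def
  have hp : HasDerivAt (fun r : ℝ => r ^ δ) (δ * r₀ ^ (δ - 1)) r₀ :=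
    Real.hasDerivAt_rpow_const (Or.inl hr.ne')
  have hD1 : HasDerivAt (fun r => r ^ δ * (1 - ω ^ 2 * f r * r ^ (-2 : ℝ)))
      (δ * r₀ ^ (δ - 1) * g₀ + r₀ ^ δ * G) r₀ := hp.mul hg
  have hD2 : HasDerivAt (fun r => f r * (1 - ω ^ 2 * f r * r ^ (-2 : ℝ))⁻¹)
      (c * g₀⁻¹ + f r₀ * (-G / g₀ ^ 2)) r₀ := hf'.mul (hg.inv hg₀.ne')
  have e1 : δ * r₀ ^ (δ - 1) * g₀ + r₀ ^ δ * G = 0 := by rw [← hD1.deriv]; exact h1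
  have e2 : c * g₀⁻¹ + f r₀ * (-G / g₀ ^ 2) = 0 := by rw [← hD2.deriv]; exact h2
  -- abbreviations
  set A := f r₀ with hA
  have hApos : 0 < A := hfpos r₀
  set u : ℝ := r₀ ^ (-2 : ℝ) with hu
  set v : ℝ := r₀ ^ ((-2 : ℝ) - 1) with hv
  set d : ℝ := r₀ ^ (δ - 1) with hd
  have hupos : 0 < u := Real.rpow_pos_of_pos hr _
  have hdpos : 0 < d := Real.rpow_pos_of_pos hr _
  have hvr : v * r₀ = u := by
    rw [hv, hu, ← Real.rpow_add_one hr.ne']; ring_nf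
  have hrd : r₀ ^ δ = d * r₀ := by
    rw [hd, ← Real.rpow_add_one hr.ne']; ring_nf
  -- from e2: c * g₀ = A * G
  have e2' : c * g₀ = A * G := by
    have h := congrArg (· * g₀ ^ 2) e2
    simp only [add_mul, zero_mul] at h
    have hne : g₀ ≠ 0 := hg₀.ne'
    field_simp at h
    have h3 : (c * g₀ - A * G) * g₀ ^ 3 = 0 := by linear_combination g₀ ^ 3 * h
    rcases mul_eq_zero.1 h3 with h4 | h4
    · linarith
    · exact absurd h4 (pow_ne_zero 3 hne)
  -- expand G
  have hGval : G = -(ω ^ 2 * c * u) + 2 * ω ^ 2 * A * v := by rw [hG]; ring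
  -- c = 2 ω² A² v
  have hcval : c = 2 * ω ^ 2 * A ^ 2 * v := by
    have key : c * (1 - ω ^ 2 * A * u) = A * (-(ω ^ 2 * c * u) + 2 * ω ^ 2 * A * v) := by
      rw [← hg₀def, ← hGval]; exact e2'
    linear_combination key
  have hGval2 : G = 2 * ω ^ 2 * A * v * g₀ := by
    rw [hGval, hcval, hg₀def]; ring
  have e1' : d * g₀ * (δ + 2 * ω ^ 2 * A * u) = 0 := by
    rw [hrd, hGval2] at e1
    linear_combination e1 - 2 * ω ^ 2 * A * d * g₀ * hvr
  have hpos : 0 < d * g₀ * (δ + 2 * ω ^ 2 * A * u) := by positivity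
  linarith [e1', hpos]
end

section
/- With F, f, h, μ, ω, δ, v_s² as in the master accretion problem, a point (r,n) in the domain satisfies ∂F/∂n (r,n) = 0 if and only if v_s²(n) = μ²/(μ² + f(r)·r^δ·n²). -/
theorem stmt5 (f h : ℝ → ℝ) (μ ω δ : ℝ) (hμ : μ ≠ 0) (hδ : 0 < δ)
    (hfpos : ∀ x, 0 < f x) (hfdiff : Differentiable ℝ f)
    (hhpos : ∀ x, 0 < h x) (hhdiff : Differentiable ℝ h)
    (r n : ℝ) (hr : 0 < r) (hn : 0 < n)
    (hΩ : 0 < 1 - ω ^ 2 * f r * r ^ (-2 : ℝ)) :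
    deriv (fun m => (h m) ^ 2 * (f r + μ ^ 2 / (r ^ δ * m ^ 2)) *
        (1 - ω ^ 2 * f r * r ^ (-2 : ℝ))⁻¹) n = 0 ↔
      n * deriv h n / h n = μ ^ 2 / (μ ^ 2 + f r * r ^ δ * n ^ 2) := by
  have hK : (0:ℝ) < r ^ δ := Real.rpow_pos_of_pos hr δ
  have hKn : r ^ δ * n ^ 2 ≠ 0 := by positivity
  have hC : (1 - ω ^ 2 * f r * r ^ (-2 : ℝ))⁻¹ ≠ 0 := inv_ne_zero (ne_of_gt hΩ)
  have hh : (0:ℝ) < h n := hhpos n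
  have hf : (0:ℝ) < f r := hfpos r
  have hμ2 : (0:ℝ) < μ ^ 2 := by positivity
  have hd : HasDerivAt
      (fun m => (h m) ^ 2 * (f r + μ ^ 2 / (r ^ δ * m ^ 2)) *
        (1 - ω ^ 2 * f r * r ^ (-2 : ℝ))⁻¹)
      (((2 * h n ^ 1 * deriv h n) * (f r + μ ^ 2 / (r ^ δ * n ^ 2)) +
        (h n) ^ 2 * (μ ^ 2 * (-(r ^ δ * (2 * n ^ 1)) / (r ^ δ * n ^ 2) ^ 2))) *
        (1 - ω ^ 2 * f r * r ^ (-2 : ℝ))⁻¹) n := by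
    have h1 : HasDerivAt (fun m => (h m) ^ 2) (2 * h n ^ 1 * deriv h n) n :=
      ((hhdiff n).hasDerivAt.pow 2)
    have h2 : HasDerivAt (fun m : ℝ => r ^ δ * m ^ 2) (r ^ δ * (2 * n ^ 1)) n :=
      (hasDerivAt_pow 2 n).const_mul (r ^ δ)
    have h3 : HasDerivAt (fun m : ℝ => μ ^ 2 / (r ^ δ * m ^ 2))
        (μ ^ 2 * (-(r ^ δ * (2 * n ^ 1)) / (r ^ δ * n ^ 2) ^ 2)) n :=
      (h2.inv hKn).const_mul (μ ^ 2)
    exact ((h1.mul (h3.const_add (f r))).mul_const _)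
  rw [hd.deriv, mul_eq_zero, or_iff_left hC]
  rw [div_eq_div_iff hh.ne' (by positivity)]
  have hc : (2 * (r ^ δ) ^ 2 * n ^ 3 * h n : ℝ) ≠ 0 := by positivity
  constructor
  · intro H
    field_simp at H
    apply mul_left_cancel₀ hc
    linear_combination (r ^ δ) ^ 2 * n ^ 3 * H
  · intro H
    field_simp
    linear_combination (2 * h n) * H
end

section
/- With F, Ω as in the master accretion problem, suppose at (r_c, n_c) both ∂F/∂r = 0 and ∂F/∂n = 0 hold, and (r^δ Ω^(-1))'(r_c) ≠ 0, (fΩ)'(r_c) ≠ 0. Then n_c² = (μ²/(r_c^δ Ω(r_c)^(-1))²)·(r^δ Ω^(-1))'(r_c)/(fΩ)'(r_c), i.e. n_c = |μ|·(r_c^δ Ω(r_c)^(-1))^(-1)·√((r^δ Ω^(-1))'(r_c)/(fΩ)'(r_c)). -/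
theorem stmt7 (f h : ℝ → ℝ) (μ ω δ : ℝ) (hμ : μ ≠ 0) (hδ : 0 < δ)
    (hfpos : ∀ x, 0 < f x) (hhpos : ∀ x, 0 < h x) (hhdiff : Differentiable ℝ h)
    (r_c n_c : ℝ) (hr : 0 < r_c) (hn : 0 < n_c)
    (hf : DifferentiableAt ℝ f r_c)
    (hΩ : 0 < 1 - ω ^ 2 * f r_c * r_c ^ (-2 : ℝ))
    (hcr : deriv (fun s => (h n_c) ^ 2 * (f s + μ ^ 2 / (s ^ δ * n_c ^ 2)) *
        (1 - ω ^ 2 * f s * s ^ (-2 : ℝ))⁻¹) r_c = 0)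
    (hcn : deriv (fun m => (h m) ^ 2 * (f r_c + μ ^ 2 / (r_c ^ δ * m ^ 2)) *
        (1 - ω ^ 2 * f r_c * r_c ^ (-2 : ℝ))⁻¹) n_c = 0)
    (hD1 : deriv (fun s => s ^ δ * (1 - ω ^ 2 * f s * s ^ (-2 : ℝ))) r_c ≠ 0)
    (hD2 : deriv (fun s => f s * (1 - ω ^ 2 * f s * s ^ (-2 : ℝ))⁻¹) r_c ≠ 0) :
    n_c ^ 2 = μ ^ 2 / (r_c ^ δ * (1 - ω ^ 2 * f r_c * r_c ^ (-2 : ℝ))) ^ 2 *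
        (deriv (fun s => s ^ δ * (1 - ω ^ 2 * f s * s ^ (-2 : ℝ))) r_c /
          deriv (fun s => f s * (1 - ω ^ 2 * f s * s ^ (-2 : ℝ))⁻¹) r_c) ∧
      n_c = |μ| / (r_c ^ δ * (1 - ω ^ 2 * f r_c * r_c ^ (-2 : ℝ))) *
        Real.sqrt (deriv (fun s => s ^ δ * (1 - ω ^ 2 * f s * s ^ (-2 : ℝ))) r_c /
          deriv (fun s => f s * (1 - ω ^ 2 * f s * s ^ (-2 : ℝ))⁻¹) r_c) := by
  have hG0 : (0:ℝ) < 1 - ω ^ 2 * f r_c * r_c ^ (-2 : ℝ) := hΩ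
  have hsδ : (0:ℝ) < r_c ^ δ := Real.rpow_pos_of_pos hr δ
  have hB0 : (0:ℝ) < r_c ^ δ * (1 - ω ^ 2 * f r_c * r_c ^ (-2 : ℝ)) := mul_pos hsδ hG0
  set G : ℝ → ℝ := fun s => 1 - ω ^ 2 * f s * s ^ (-2 : ℝ) with hGdef
  set B : ℝ → ℝ := fun s => s ^ δ * G s with hBdef
  set A : ℝ → ℝ := fun s => f s * (G s)⁻¹ with hAdef
  have hpow : DifferentiableAt ℝ (fun s : ℝ => s ^ (-2:ℝ)) r_c := by
    simpa using Real.differentiableAt_rpow_const_of_ne (-2) hr.ne'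
  have hGd : DifferentiableAt ℝ G r_c := by
    exact (differentiableAt_const _).sub (((differentiableAt_const _).mul hf).mul hpow)
  have hδd : DifferentiableAt ℝ (fun s : ℝ => s ^ δ) r_c := by
    simpa using Real.differentiableAt_rpow_const_of_ne δ hr.ne'
  have hBd : DifferentiableAt ℝ B r_c := hδd.mul hGd
  have hAd : DifferentiableAt ℝ A r_c := hf.mul (hGd.inv hG0.ne')
  have hn2 : (0:ℝ) < n_c ^ 2 := by positivity
  -- eventual equality
  have hev : (fun s => (h n_c) ^ 2 * (f s + μ ^ 2 / (s ^ δ * n_c ^ 2)) * (G s)⁻¹)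
      =ᶠ[nhds r_c] (fun s => (h n_c) ^ 2 * (A s + (μ ^ 2 / n_c ^ 2) * (B s)⁻¹)) := by
    have h1 : ∀ᶠ s in nhds r_c, 0 < s := eventually_gt_nhds hr
    have h2 : ∀ᶠ s in nhds r_c, G s ≠ 0 := hGd.continuousAt.eventually_ne hG0.ne'
    filter_upwards [h1, h2] with s hs hGs
    have hsd : (0:ℝ) < s ^ δ := Real.rpow_pos_of_pos hs δ
    simp only [hAdef, hBdef]
    field_simp
  have heq := hev.deriv_eq
  rw [hcr] at heq
  have hdRHS : deriv (fun s => (h n_c) ^ 2 * (A s + (μ ^ 2 / n_c ^ 2) * (B s)⁻¹)) r_c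
      = (h n_c) ^ 2 * (deriv A r_c + (μ ^ 2 / n_c ^ 2) * (-(deriv B r_c) / (B r_c) ^ 2)) := by
    rw [deriv_const_mul (d := fun s => A s + μ ^ 2 / n_c ^ 2 * (B s)⁻¹) _ (hAd.add ((differentiableAt_const _).mul (hBd.inv hB0.ne'))),
      deriv_fun_add (g := fun s => μ ^ 2 / n_c ^ 2 * (B s)⁻¹) hAd ((differentiableAt_const _).mul (hBd.inv hB0.ne')),
      deriv_const_mul (d := fun s => (B s)⁻¹) _ (hBd.inv hB0.ne'), deriv_fun_inv'' hBd hB0.ne']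
  rw [hdRHS] at heq
  have hh2 : (h n_c) ^ 2 ≠ 0 := pow_ne_zero 2 (hhpos n_c).ne'
  have hkey : deriv A r_c + (μ ^ 2 / n_c ^ 2) * (-(deriv B r_c) / (B r_c) ^ 2) = 0 := by
    rcases mul_eq_zero.mp heq.symm with h' | h'
    · exact absurd h' hh2
    · exact h'
  have hBrc : B r_c = r_c ^ δ * G r_c := rfl
  have hD2' : deriv A r_c ≠ 0 := hD2
  have hD1' : deriv B r_c ≠ 0 := hD1
  have hmain : n_c ^ 2 = μ ^ 2 / (B r_c) ^ 2 * (deriv B r_c / deriv A r_c) := by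
    have hB' : B r_c ≠ 0 := hB0.ne'
    field_simp at hkey ⊢
    nlinarith [hkey, sq_nonneg (B r_c)]
  refine ⟨hmain, ?_⟩
  have hRpos : 0 < deriv B r_c / deriv A r_c := by
    have : 0 < μ ^ 2 / (B r_c) ^ 2 * (deriv B r_c / deriv A r_c) := hmain ▸ hn2
    have hμ2 : 0 < μ ^ 2 / (B r_c) ^ 2 := by positivity
    nlinarith [this, hμ2]
  have hfin : n_c = |μ| / B r_c * Real.sqrt (deriv B r_c / deriv A r_c) := by
    have h1 : n_c = Real.sqrt (n_c ^ 2) := (Real.sqrt_sq hn.le).symm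
    rw [h1, hmain, show μ ^ 2 / (B r_c) ^ 2 = (|μ| / B r_c) ^ 2 by rw [div_pow, sq_abs],
      Real.sqrt_mul (by positivity), Real.sqrt_sq (div_nonneg (abs_nonneg μ) hB0.le)]
  exact hfin
end

section
/- Take h(n) = C·n^(γ-1) with C > 0 and γ - 1 = 1/(D-1) (ideal photon gas in spacetime dimension D ≥ 3), δ = 2(D-2), and F(r,n) := h(n)²·(f(r) + μ²/(r^δ n²))·(1 - ω²f(r)r^(-2))^(-1). If (r_c, n_c) with r_c > 0, n_c > 0, 1 - ω²f(r_c)r_c^(-2) > 0 is a critical point of F (both partial derivatives vanish), then (f·r^(-2))'(r_c) = 0. -/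
theorem stmt8 (f : ℝ → ℝ) (C μ ω : ℝ) (D : ℕ) (hD : 3 ≤ D) (hC : 0 < C) (hμ : μ ≠ 0)
    (hfpos : ∀ x, 0 < f x)
    (r_c n_c : ℝ) (hr : 0 < r_c) (hn : 0 < n_c)
    (hf : DifferentiableAt ℝ f r_c)
    (hΩ : 0 < 1 - ω ^ 2 * f r_c * r_c ^ (-2 : ℝ))
    (hcr : deriv (fun s => (C * n_c ^ (((D : ℝ) - 1)⁻¹)) ^ 2 *
        (f s + μ ^ 2 / (s ^ (2 * ((D : ℝ) - 2)) * n_c ^ 2)) *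
        (1 - ω ^ 2 * f s * s ^ (-2 : ℝ))⁻¹) r_c = 0)
    (hcn : deriv (fun m => (C * m ^ (((D : ℝ) - 1)⁻¹)) ^ 2 *
        (f r_c + μ ^ 2 / (r_c ^ (2 * ((D : ℝ) - 2)) * m ^ 2)) *
        (1 - ω ^ 2 * f r_c * r_c ^ (-2 : ℝ))⁻¹) n_c = 0) :
    deriv (fun s => f s * s ^ (-2 : ℝ)) r_c = 0 := by
  set d : ℝ := (D : ℝ) with hd
  have hd3 : (3:ℝ) ≤ d := by rw [hd]; exact_mod_cast hD
  set γ : ℝ := (d - 1)⁻¹ with hγ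
  set δ : ℝ := 2 * (d - 2) with hδ
  set K : ℝ := f r_c with hK
  set Ω : ℝ := 1 - ω ^ 2 * K * r_c ^ (-2 : ℝ) with hΩdef
  have hΩne : Ω ≠ 0 := ne_of_gt hΩ
  have hrne : r_c ≠ 0 := hr.ne'
  have hnne : n_c ≠ 0 := hn.ne'
  have hRpos : 0 < r_c ^ δ := Real.rpow_pos_of_pos hr δ
  have hqpos : 0 < n_c ^ γ := Real.rpow_pos_of_pos hn γ
  have hden : r_c ^ δ * n_c ^ 2 ≠ 0 := by positivity
  -- derivative in n
  have h1 : HasDerivAt (fun m : ℝ => m ^ γ) (γ * n_c ^ (γ - 1)) n_c :=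
    Real.hasDerivAt_rpow_const (Or.inl hnne)
  have h3 : HasDerivAt (fun m : ℝ => (C * m ^ γ) ^ 2)
      (2 * (C * n_c ^ γ) ^ 1 * (C * (γ * n_c ^ (γ - 1)))) n_c := by
    simpa using (h1.const_mul C).fun_pow 2
  have h4 : HasDerivAt (fun m : ℝ => r_c ^ δ * m ^ 2) (r_c ^ δ * (2 * n_c ^ 1)) n_c :=
    (hasDerivAt_pow 2 n_c).const_mul _
  have h6 : HasDerivAt (fun m : ℝ => K + μ ^ 2 / (r_c ^ δ * m ^ 2))
      ((0 * (r_c ^ δ * n_c ^ 2) - μ ^ 2 * (r_c ^ δ * (2 * n_c ^ 1))) / (r_c ^ δ * n_c ^ 2) ^ 2)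
      n_c := ((hasDerivAt_const n_c (μ ^ 2)).div h4 hden).const_add K
  have h9 : HasDerivAt (fun m : ℝ => (C * m ^ γ) ^ 2 * (K + μ ^ 2 / (r_c ^ δ * m ^ 2)) * Ω⁻¹)
      ((2 * (C * n_c ^ γ) ^ 1 * (C * (γ * n_c ^ (γ - 1))) * (K + μ ^ 2 / (r_c ^ δ * n_c ^ 2)) +
        (C * n_c ^ γ) ^ 2 *
          ((0 * (r_c ^ δ * n_c ^ 2) - μ ^ 2 * (r_c ^ δ * (2 * n_c ^ 1))) / (r_c ^ δ * n_c ^ 2) ^ 2)) * Ω⁻¹)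
      n_c := (h3.mul h6).mul_const _
  have hEn := h9.deriv
  rw [hcn] at hEn
  -- extract relation from hEn
  have hq1 : n_c ^ (γ - 1) = n_c ^ γ / n_c := by
    rw [Real.rpow_sub hn, Real.rpow_one]
  rw [hq1] at hEn
  have hγpos : 0 < γ := by rw [hγ]; exact inv_pos.mpr (by linarith)
  have hKA : γ * (K * (r_c ^ δ * n_c ^ 2) + μ ^ 2) = μ ^ 2 := by
    have hC' : C ≠ 0 := hC.ne'
    have hq' : n_c ^ γ ≠ 0 := hqpos.ne'
    have hR' : r_c ^ δ ≠ 0 := hRpos.ne'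
    field_simp at hEn
    have key : 2 * C ^ 2 * ((n_c ^ γ) ^ 2 * ((r_c ^ δ) ^ 2 * n_c ^ 4)) *
        (γ * (K * (r_c ^ δ * n_c ^ 2) + μ ^ 2) - μ ^ 2) = 0 := by linear_combination (-(r_c ^ δ) ^ 2 * n_c ^ 4) * hEn
    have h2 : (0:ℝ) < 2 * C ^ 2 * ((n_c ^ γ) ^ 2 * ((r_c ^ δ) ^ 2 * n_c ^ 4)) := by positivity
    have := (mul_eq_zero.mp key).resolve_left h2.ne'
    linarith
  -- r-derivative
  have hKval : K * (r_c ^ δ * n_c ^ 2) = μ ^ 2 * (d - 2) := by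
    have hγval : γ * (d - 1) = 1 := inv_mul_cancel₀ (by linarith)
    linear_combination (d - 1) * hKA - (K * (r_c ^ δ * n_c ^ 2) + μ ^ 2) * hγval
  set f' : ℝ := deriv f r_c with hf'def
  have hfd : HasDerivAt f f' r_c := hf.hasDerivAt
  have hs1 : HasDerivAt (fun s : ℝ => s ^ δ) (δ * r_c ^ (δ - 1)) r_c :=
    Real.hasDerivAt_rpow_const (Or.inl hrne)
  have hs2 : HasDerivAt (fun s : ℝ => s ^ δ * n_c ^ 2) (δ * r_c ^ (δ - 1) * n_c ^ 2) r_c :=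
    hs1.mul_const _
  have hs3 : HasDerivAt (fun s : ℝ => f s + μ ^ 2 / (s ^ δ * n_c ^ 2))
      (f' + (0 * (r_c ^ δ * n_c ^ 2) - μ ^ 2 * (δ * r_c ^ (δ - 1) * n_c ^ 2)) /
        (r_c ^ δ * n_c ^ 2) ^ 2) r_c :=
    hfd.add ((hasDerivAt_const r_c (μ ^ 2)).div hs2 hden)
  have hs5 : HasDerivAt (fun s : ℝ => s ^ (-2:ℝ)) ((-2:ℝ) * r_c ^ ((-2:ℝ) - 1)) r_c :=
    Real.hasDerivAt_rpow_const (Or.inl hrne)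
  have hs6 : HasDerivAt (fun s : ℝ => 1 - ω ^ 2 * f s * s ^ (-2:ℝ))
      (-(ω ^ 2 * f' * r_c ^ (-2:ℝ) + ω ^ 2 * K * ((-2:ℝ) * r_c ^ ((-2:ℝ) - 1)))) r_c := by
    simpa using ((hfd.const_mul (ω ^ 2)).mul hs5).const_sub 1
  have hΩne' : (1 - ω ^ 2 * f r_c * r_c ^ (-2:ℝ)) ≠ 0 := hΩne
  have hs8 := hs6.fun_inv hΩne'
  have hs9 := ((hs3.const_mul ((C * n_c ^ γ) ^ 2)).fun_mul hs8)
  have hEr := hs9.deriv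
  rw [hcr] at hEr
  have hrp1 : r_c ^ (δ - 1) = r_c ^ δ / r_c := by rw [Real.rpow_sub hr, Real.rpow_one]
  have hm2 : r_c ^ (-2:ℝ) = (r_c ^ 2)⁻¹ := by
    rw [Real.rpow_neg hr.le, show (2:ℝ) = ((2:ℕ):ℝ) by norm_num, Real.rpow_natCast]
  have hm3 : r_c ^ ((-2:ℝ) - 1) = (r_c ^ 3)⁻¹ := by
    rw [show ((-2):ℝ) - 1 = -(3:ℝ) by norm_num, Real.rpow_neg hr.le,
      show (3:ℝ) = ((3:ℕ):ℝ) by norm_num, Real.rpow_natCast]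
  rw [hrp1, hm2, hm3] at hEr
  rw [hm2] at hΩdef
  have hC' : C ≠ 0 := hC.ne'
  have hq' : n_c ^ γ ≠ 0 := hqpos.ne'
  have hR' : r_c ^ δ ≠ 0 := hRpos.ne'
  rw [← hK] at hEr
  have hΩr : 1 - ω ^ 2 * K * (r_c ^ 2)⁻¹ = Ω * r_c ^ 2 / r_c ^ 2 := by
    rw [hΩdef]; field_simp
  rw [hΩr] at hEr
  have hΩrne : Ω * r_c ^ 2 ≠ 0 := mul_ne_zero hΩne (by positivity)
  field_simp at hEr
  have key2 : Ω * ((C * n_c ^ γ) ^ 2 * (r_c ^ δ * n_c ^ 2) ^ 2 * r_c ^ 3) *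
      (Ω * r_c ^ 2 * (f' * r_c * (r_c ^ δ * n_c ^ 2) - μ ^ 2 * δ) +
        (K * (r_c ^ δ * n_c ^ 2) + μ ^ 2) * ω ^ 2 * (f' * r_c - 2 * K)) = 0 := by
    linear_combination (-Ω * (r_c ^ δ * n_c ^ 2) ^ 2 * r_c ^ 3) * hEr
  have hfac1 : Ω * ((C * n_c ^ γ) ^ 2 * (r_c ^ δ * n_c ^ 2) ^ 2 * r_c ^ 3) ≠ 0 :=
    mul_ne_zero hΩne (by positivity)
  have hE2 := (mul_eq_zero.mp key2).resolve_left hfac1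
  have hG : (f' * r_c - 2 * K) *
      (Ω * r_c ^ 2 * (r_c ^ δ * n_c ^ 2) + μ ^ 2 * (d - 1) * ω ^ 2) = 0 := by
    linear_combination hE2 + (-2 * Ω * r_c ^ 2 - (f' * r_c - 2 * K) * ω ^ 2) * hKval +
      Ω * r_c ^ 2 * μ ^ 2 * hδ
  have hfac2 : 0 < Ω * r_c ^ 2 * (r_c ^ δ * n_c ^ 2) + μ ^ 2 * (d - 1) * ω ^ 2 := by
    have h1 : 0 < Ω * r_c ^ 2 * (r_c ^ δ * n_c ^ 2) :=
      mul_pos (mul_pos hΩ (by positivity)) (by positivity)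
    have h2 : 0 ≤ μ ^ 2 * (d - 1) * ω ^ 2 := by
      apply mul_nonneg (mul_nonneg (by positivity) (by linarith)) (by positivity)
    linarith
  have hG0 : f' * r_c - 2 * K = 0 := (mul_eq_zero.mp hG).resolve_right hfac2.ne'
  rw [(hfd.fun_mul hs5).deriv, hm2, hm3, ← hK]
  field_simp
  linear_combination hG0
end

section
/- In the setting of the photon gas accretion problem (h(n) = C·n^(1/(D-1)), δ = 2(D-2), D ≥ 3), if (r_c, n_c) is a critical point of F, then n_c = |μ|·√(δ/(r_c^(δ+1)·f'(r_c))), and this value is independent of the rotation parameter ω. -/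
theorem stmt9 (f : ℝ → ℝ) (C μ ω : ℝ) (D : ℕ) (hD : 3 ≤ D) (hC : 0 < C) (hμ : μ ≠ 0)
    (hfpos : ∀ x, 0 < f x)
    (r_c n_c : ℝ) (hr : 0 < r_c) (hn : 0 < n_c)
    (hf : DifferentiableAt ℝ f r_c) (hf' : 0 < deriv f r_c)
    (hΩ : 0 < 1 - ω ^ 2 * f r_c * r_c ^ (-2 : ℝ))
    (hcr : deriv (fun s => (C * n_c ^ (((D : ℝ) - 1)⁻¹)) ^ 2 *
        (f s + μ ^ 2 / (s ^ (2 * ((D : ℝ) - 2)) * n_c ^ 2)) *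
        (1 - ω ^ 2 * f s * s ^ (-2 : ℝ))⁻¹) r_c = 0)
    (hcn : deriv (fun m => (C * m ^ (((D : ℝ) - 1)⁻¹)) ^ 2 *
        (f r_c + μ ^ 2 / (r_c ^ (2 * ((D : ℝ) - 2)) * m ^ 2)) *
        (1 - ω ^ 2 * f r_c * r_c ^ (-2 : ℝ))⁻¹) n_c = 0) :
    n_c = |μ| * Real.sqrt (2 * ((D : ℝ) - 2) /
      (r_c ^ (2 * ((D : ℝ) - 2) + 1) * deriv f r_c)) := by
  have hD3 : (3:ℝ) ≤ (D:ℝ) := by exact_mod_cast hD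
  set δ : ℝ := 2 * ((D:ℝ) - 2) with hδdef
  set p : ℝ := ((D:ℝ) - 1)⁻¹ with hpdef
  have hδ2 : (2:ℝ) ≤ δ := by rw [hδdef]; linarith
  have hδpos : (0:ℝ) < δ := by linarith
  have hD1 : (D:ℝ) - 1 ≠ 0 := by linarith
  have hD1' : (0:ℝ) < (D:ℝ) - 1 := by linarith
  have hppos : 0 < p := by rw [hpdef]; exact inv_pos.mpr hD1'
  have hpδ : δ * p + 2 * p = 2 := by
    rw [hδdef, hpdef]; field_simp; ring
  set K : ℝ := (1 - ω ^ 2 * f r_c * r_c ^ (-2:ℝ))⁻¹ with hK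
  have hKpos : 0 < K := inv_pos.mpr hΩ
  have hrδ : (0:ℝ) < r_c ^ δ := Real.rpow_pos_of_pos hr δ
  have hapos : (0:ℝ) < n_c ^ p := Real.rpow_pos_of_pos hn p
  have hne : r_c ^ δ * n_c ^ 2 ≠ 0 := by positivity
  -- Part 1: the criticality in n gives  δ μ² = 2 f(r_c) r_c^δ n_c²
  have hE1 : δ * μ ^ 2 = 2 * f r_c * (r_c ^ δ * n_c ^ 2) := by
    have h1 : HasDerivAt (fun m : ℝ => m ^ p) (p * n_c ^ (p - 1)) n_c :=
      Real.hasDerivAt_rpow_const (Or.inl hn.ne')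
    have h2 : HasDerivAt (fun m : ℝ => C * m ^ p) (C * (p * n_c ^ (p - 1))) n_c := h1.const_mul C
    have h3 : HasDerivAt (fun m : ℝ => (C * m ^ p) ^ 2)
        (2 * (C * n_c ^ p) ^ 1 * (C * (p * n_c ^ (p - 1)))) n_c := h2.pow 2
    have h4 : HasDerivAt (fun m : ℝ => r_c ^ δ * m ^ 2) (r_c ^ δ * (2 * n_c ^ 1)) n_c :=
      (hasDerivAt_pow 2 n_c).const_mul (r_c ^ δ)
    have h5 : HasDerivAt (fun m : ℝ => f r_c + μ ^ 2 / (r_c ^ δ * m ^ 2))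
        (μ ^ 2 * (-(r_c ^ δ * (2 * n_c ^ 1)) / (r_c ^ δ * n_c ^ 2) ^ 2)) n_c := by
      have := ((h4.inv hne).const_mul (μ ^ 2)).const_add (f r_c)
      simpa [div_eq_mul_inv, mul_comm] using this
    have h6 := (h3.mul h5).mul_const K
    have heq : deriv (fun m => (C * m ^ p) ^ 2 * (f r_c + μ ^ 2 / (r_c ^ δ * m ^ 2)) * K) n_c = _ := h6.deriv
    rw [hcn] at heq
    have hnp1 : n_c ^ (p - 1) = n_c ^ p / n_c := by
      rw [Real.rpow_sub hn, Real.rpow_one]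
    rw [hnp1] at heq
    have hbr : 2 * (C * n_c ^ p) ^ 1 * (C * (p * (n_c ^ p / n_c))) * (f r_c + μ ^ 2 / (r_c ^ δ * n_c ^ 2))
        + (C * n_c ^ p) ^ 2 * (μ ^ 2 * (-(r_c ^ δ * (2 * n_c ^ 1)) / (r_c ^ δ * n_c ^ 2) ^ 2)) = 0 := by
      rcases mul_eq_zero.mp heq.symm with h | h
      · exact h
      · exact absurd h hKpos.ne'
    field_simp at hbr
    have hfact : 2 * C^2 * (n_c^p)^2 * (r_c^δ * n_c^2)^2 *
        (p * (f r_c * (r_c^δ * n_c^2) + μ^2) - μ^2) = 0 := by linear_combination (r_c^δ * n_c^2)^2 * hbr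
    have hE : p * (f r_c * (r_c ^ δ * n_c ^ 2) + μ ^ 2) - μ ^ 2 = 0 := by
      rcases mul_eq_zero.mp hfact with h | h
      · exfalso; have : (0:ℝ) < 2 * C^2 * (n_c^p)^2 * (r_c^δ * n_c^2)^2 := by positivity
        exact this.ne' h
      · exact h
    have goal' : p * (δ * μ^2) = p * (2 * f r_c * (r_c ^ δ * n_c ^ 2)) := by
      linear_combination μ^2 * hpδ - 2 * hE
    exact mul_left_cancel₀ hppos.ne' goal'
  -- Part 2: the criticality in r gives  f'(r_c) r_c = 2 f(r_c)
  have hslope : deriv f r_c * r_c = 2 * f r_c := by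
    set A : ℝ := (C * n_c ^ p) ^ 2 with hA
    have hApos : 0 < A := by positivity
    have hGne : 1 - ω ^ 2 * f r_c * r_c ^ (-2:ℝ) ≠ 0 := hΩ.ne'
    have hfd : HasDerivAt f (deriv f r_c) r_c := hf.hasDerivAt
    have hsδ : HasDerivAt (fun s : ℝ => s ^ δ) (δ * r_c ^ (δ - 1)) r_c :=
      Real.hasDerivAt_rpow_const (Or.inl hr.ne')
    have g1 : HasDerivAt (fun s : ℝ => s ^ δ * n_c ^ 2) (δ * r_c ^ (δ - 1) * n_c ^ 2) r_c :=
      hsδ.mul_const _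
    have g3 : HasDerivAt (fun s : ℝ => μ ^ 2 / (s ^ δ * n_c ^ 2))
        (μ ^ 2 * (-(δ * r_c ^ (δ - 1) * n_c ^ 2) / (r_c ^ δ * n_c ^ 2) ^ 2)) r_c := by
      simpa [div_eq_mul_inv] using (g1.inv hne).const_mul (μ ^ 2)
    have g4 := hfd.add g3
    have hsm2 : HasDerivAt (fun s : ℝ => s ^ (-2:ℝ)) ((-2) * r_c ^ ((-2:ℝ) - 1)) r_c :=
      Real.hasDerivAt_rpow_const (Or.inl hr.ne')
    have g5 := ((hfd.const_mul (ω ^ 2)).mul hsm2)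
    have g6 := g5.const_sub 1
    have g7 := g6.inv hGne
    have g8 := (g4.const_mul A).mul g7
    have heq : deriv (fun s => A * (f s + μ ^ 2 / (s ^ δ * n_c ^ 2)) * (1 - ω ^ 2 * f s * s ^ (-2:ℝ))⁻¹) r_c = _ := g8.deriv
    rw [hcr] at heq
    simp only [Pi.add_apply, Pi.mul_apply, Pi.inv_apply] at heq
    have e1 : r_c ^ (δ - 1) = r_c ^ δ / r_c := by rw [Real.rpow_sub hr, Real.rpow_one]
    have e2 : r_c ^ ((-2:ℝ) - 1) = r_c ^ (-2:ℝ) / r_c := by rw [Real.rpow_sub hr, Real.rpow_one]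
    rw [e1, e2] at heq
    field_simp at heq
    set G : ℝ := 1 - ω ^ 2 * f r_c * r_c ^ (-2:ℝ) with hGdef
    set X : ℝ := r_c ^ δ * n_c ^ 2 with hXdef
    set F' : ℝ := deriv f r_c with hF'def
    have hXpos : (0:ℝ) < X := by rw [hXdef]; positivity
    have hfact : (F' * r_c - 2 * f r_c) *
        (A * X ^ 3 * r_c * G * (δ * G + (δ + 2) * (f r_c * (ω ^ 2 * r_c ^ (-2:ℝ))))) = 0 := by
      linear_combination (-δ * X ^ 2 * r_c * G) * heq + (X ^ 2 * r_c * G * A * δ * G * F' * r_c) * hXdef +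
        (δ * A * X ^ 2 * r_c * G ^ 2 - A * X ^ 2 * r_c * G * ω ^ 2 * r_c ^ (-2:ℝ) *
          (F' * r_c - 2 * f r_c)) * hE1
    have hbrpos : 0 < δ * G + (δ + 2) * (f r_c * (ω ^ 2 * r_c ^ (-2:ℝ))) := by
      have h1 : 0 < δ * G := mul_pos hδpos hΩ
      have h2 : 0 ≤ (δ + 2) * (f r_c * (ω ^ 2 * r_c ^ (-2:ℝ))) := by
        apply mul_nonneg (by linarith)
        have := hfpos r_c
        positivity
      linarith
    have hPpos : 0 < A * X ^ 3 * r_c * G * (δ * G + (δ + 2) * (f r_c * (ω ^ 2 * r_c ^ (-2:ℝ)))) := by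
      apply mul_pos (mul_pos (mul_pos (mul_pos hApos (by positivity)) hr) hΩ) hbrpos
    rcases mul_eq_zero.mp hfact with h | h
    · linarith [sub_eq_zero.mp h]
    · exact absurd h hPpos.ne'
  -- Conclusion
  have hrδ1 : r_c ^ (δ + 1) = r_c ^ δ * r_c := by rw [Real.rpow_add hr, Real.rpow_one]
  have hQ : n_c ^ 2 = μ ^ 2 * (δ / (r_c ^ (δ + 1) * deriv f r_c)) := by
    rw [hrδ1]
    have hd : r_c ^ δ * r_c * deriv f r_c ≠ 0 := by positivity
    field_simp
    linear_combination n_c ^ 2 * r_c ^ δ * hslope - hE1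
  have hsq : n_c = Real.sqrt (μ ^ 2 * (δ / (r_c ^ (δ + 1) * deriv f r_c))) := by
    rw [← hQ, Real.sqrt_sq hn.le]
  rw [hsq, Real.sqrt_mul (sq_nonneg μ), Real.sqrt_sq_eq_abs]
end

section
/- Let v_s² = 1/(D-1) with D ≥ 3, δ = 2(D-2), f positive and differentiable, ω ∈ ℝ, Ω(r) := (1 - ω²f(r)r^(-2))^(-1) with Ω > 0, and suppose (fΩ)'(r) ≠ 0. Then the critical-radius function ℱ(r) := v_s²·[1 + ((r^δ Ω^(-1))'(r)/(r^δ Ω^(-1)(r)))·(f(r)Ω(r)/(fΩ)'(r))] - 1 satisfies ℱ(r) = -(1/(δ+2))·(f(r)Ω(r)/(fΩ)'(r))·((δ + 2ω²f(r)r^(-2))/(f(r)r^(-2)·(1 - ω²f(r)r^(-2))))·(f·r^(-2))'(r). -/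
set_option maxHeartbeats 1200000

theorem stmt14 (f : ℝ → ℝ) (ω : ℝ) (D : ℕ) (hD : 3 ≤ D)
    (hfpos : ∀ x, 0 < f x)
    (r : ℝ) (hr : 0 < r) (hf : DifferentiableAt ℝ f r)
    (hΩ : 0 < 1 - ω ^ 2 * f r * r ^ (-2 : ℝ))
    (hD2 : deriv (fun s => f s * (1 - ω ^ 2 * f s * s ^ (-2 : ℝ))⁻¹) r ≠ 0) :
    ((D : ℝ) - 1)⁻¹ *
        (1 + deriv (fun s => s ^ (2 * ((D : ℝ) - 2)) *
            (1 - ω ^ 2 * f s * s ^ (-2 : ℝ))) r /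
          (r ^ (2 * ((D : ℝ) - 2)) * (1 - ω ^ 2 * f r * r ^ (-2 : ℝ))) *
          (f r * (1 - ω ^ 2 * f r * r ^ (-2 : ℝ))⁻¹ /
            deriv (fun s => f s * (1 - ω ^ 2 * f s * s ^ (-2 : ℝ))⁻¹) r)) - 1 =
      -(1 / (2 * ((D : ℝ) - 2) + 2)) *
        (f r * (1 - ω ^ 2 * f r * r ^ (-2 : ℝ))⁻¹ /
          deriv (fun s => f s * (1 - ω ^ 2 * f s * s ^ (-2 : ℝ))⁻¹) r) *
        ((2 * ((D : ℝ) - 2) + 2 * ω ^ 2 * f r * r ^ (-2 : ℝ)) /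
          (f r * r ^ (-2 : ℝ) * (1 - ω ^ 2 * f r * r ^ (-2 : ℝ)))) *
        deriv (fun s => f s * s ^ (-2 : ℝ)) r := by
  have hr0 : r ≠ 0 := hr.ne'
  set F := f r with hF
  set F' := deriv f r with hF'
  set x : ℝ := r ^ (-2 : ℝ) with hx
  set δ : ℝ := 2 * ((D : ℝ) - 2) with hδ
  set P : ℝ := r ^ δ with hP
  have hr3 : r ^ (-3 : ℝ) = x / r := by
    rw [hx, show (-3 : ℝ) = -2 - 1 by norm_num, Real.rpow_sub hr, Real.rpow_one]
  have hrδ1 : r ^ (δ - 1) = P / r := by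
    rw [hP, Real.rpow_sub hr, Real.rpow_one]
  -- basic derivatives
  have hd_pow : HasDerivAt (fun s : ℝ => s ^ (-2 : ℝ)) (-2 * (x / r)) r := by
    have := Real.hasDerivAt_rpow_const (x := r) (p := (-2 : ℝ)) (Or.inl hr0)
    rw [← hr3]
    convert this using 1
    norm_num
  have hd_fx : HasDerivAt (fun s => f s * s ^ (-2 : ℝ))
      (F' * x + F * (-2 * (x / r))) r :=
    (hf.hasDerivAt).mul hd_pow
  have hd_g : HasDerivAt (fun s => 1 - ω ^ 2 * f s * s ^ (-2 : ℝ))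
      (-(ω ^ 2 * (F' * x + F * (-2 * (x / r))))) r := by
    have h1 : HasDerivAt (fun s => ω ^ 2 * (f s * s ^ (-2 : ℝ)))
        (ω ^ 2 * (F' * x + F * (-2 * (x / r)))) r := hd_fx.const_mul _
    have := h1.const_sub (1 : ℝ)
    simpa [mul_assoc] using this
  set G : ℝ := 1 - ω ^ 2 * F * x with hG
  have hG0 : G ≠ 0 := by rw [hG]; exact ne_of_gt hΩ
  have hd_ginv : HasDerivAt (fun s => (1 - ω ^ 2 * f s * s ^ (-2 : ℝ))⁻¹)
      (-(-(ω ^ 2 * (F' * x + F * (-2 * (x / r))))) / G ^ 2) r := hd_g.inv hG0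
  have hd_fginv : HasDerivAt (fun s => f s * (1 - ω ^ 2 * f s * s ^ (-2 : ℝ))⁻¹)
      (F' * G⁻¹ + F * (-(-(ω ^ 2 * (F' * x + F * (-2 * (x / r))))) / G ^ 2)) r :=
    (hf.hasDerivAt).mul hd_ginv
  have hd_rδ : HasDerivAt (fun s : ℝ => s ^ δ) (δ * (P / r)) r := by
    rw [← hrδ1]; exact Real.hasDerivAt_rpow_const (Or.inl hr0)
  have hd_top : HasDerivAt (fun s : ℝ => s ^ δ * (1 - ω ^ 2 * f s * s ^ (-2 : ℝ)))
      (δ * (P / r) * G + P * (-(ω ^ 2 * (F' * x + F * (-2 * (x / r)))))) r :=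
    hd_rδ.mul hd_g
  rw [hd_fx.deriv, hd_fginv.deriv, hd_top.deriv]
  rw [hd_fginv.deriv] at hD2
  have hP0 : P ≠ 0 := (Real.rpow_pos_of_pos hr δ).ne'
  have hx0 : x ≠ 0 := (Real.rpow_pos_of_pos hr _).ne'
  have hF0 : F ≠ 0 := (hfpos r).ne'
  have hD1 : (D : ℝ) - 1 ≠ 0 := by
    have : (3 : ℝ) ≤ (D : ℝ) := by exact_mod_cast hD
    nlinarith
  have hδ2 : δ + 2 ≠ 0 := by
    have : (3 : ℝ) ≤ (D : ℝ) := by exact_mod_cast hD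
    rw [hδ]; nlinarith
  have hδD : δ = 2 * ((D : ℝ) - 2) := hδ
  set N : ℝ := F' * G * r + F * ω ^ 2 * (F' * x * r - 2 * F * x) with hN
  have hYeq : F' * G⁻¹ + F * (-(-(ω ^ 2 * (F' * x + F * (-2 * (x / r))))) / G ^ 2)
      = N / (G ^ 2 * r) := by
    rw [hN]; field_simp; ring
  rw [hYeq] at hD2 ⊢
  have hN0 : N ≠ 0 := by
    intro h; apply hD2; rw [h]; simp
  have hG0' : (1 - ω ^ 2 * F * x) ≠ 0 := by rw [← hG]; exact hG0
  have hN0' : F' * (1 - ω ^ 2 * F * x) * r + F * ω ^ 2 * (F' * x * r - 2 * F * x) ≠ 0 := by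
    rw [← hG, ← hN]; exact hN0
  clear_value F F' x δ P G N
  subst hδ
  subst hN
  subst hG
  have hN1 : r * F' - 2 * F ^ 2 * ω ^ 2 * x ≠ 0 := by
    convert hN0' using 1; ring
  rw [show F' * (1 - ω ^ 2 * F * x) * r + F * ω ^ 2 * (F' * x * r - 2 * F * x) = r * F' - 2 * F ^ 2 * ω ^ 2 * x by ring]
  generalize hM : r * F' - 2 * F ^ 2 * ω ^ 2 * x = M at hN1 ⊢
  rw [show 2 * ((D : ℝ) - 2) + 2 = 2 * ((D : ℝ) - 1) by ring]
  field_simp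
  rw [← hM]
  ring
end

section
/- Let f be positive and differentiable at r₀ > 0, δ > 0, ω ∈ ℝ with 1 - ω²f(r₀)r₀^(-2) > 0, and suppose (f·r^δ)'(r₀) = 0 where δ > 0. Then (r^δ·Ω^(-1))'(r₀) = r₀^(δ-1)·(δ + 2ω²f(r₀)r₀^(-2)) where Ω^(-1)(r) := 1 - ω²f(r)r^(-2); in particular this derivative is strictly positive. -/
theorem stmt15 (f : ℝ → ℝ) (δ ω r₀ : ℝ) (hr : 0 < r₀) (hδ : 0 < δ)
    (hfpos : ∀ x, 0 < f x) (hf : DifferentiableAt ℝ f r₀)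
    (hΩ : 0 < 1 - ω ^ 2 * f r₀ * r₀ ^ (-2 : ℝ))
    (h : deriv (fun r => f r * r ^ δ) r₀ = 0) :
    deriv (fun r => r ^ δ * (1 - ω ^ 2 * f r * r ^ (-2 : ℝ))) r₀ =
        r₀ ^ (δ - 1) * (δ + 2 * ω ^ 2 * f r₀ * r₀ ^ (-2 : ℝ)) ∧
      0 < r₀ ^ (δ - 1) * (δ + 2 * ω ^ 2 * f r₀ * r₀ ^ (-2 : ℝ)) := by
  have hr0 : r₀ ≠ 0 := ne_of_gt hr
  set f' := deriv f r₀ with hf'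
  have hF : HasDerivAt f f' r₀ := hf.hasDerivAt
  have hpow : HasDerivAt (fun r : ℝ => r ^ δ) (δ * r₀ ^ (δ - 1)) r₀ :=
    Real.hasDerivAt_rpow_const (Or.inl hr0)
  have hpow2 : HasDerivAt (fun r : ℝ => r ^ (-2 : ℝ)) ((-2) * r₀ ^ ((-2 : ℝ) - 1)) r₀ :=
    Real.hasDerivAt_rpow_const (Or.inl hr0)
  -- derivative of f * r^δ
  have h1 : HasDerivAt (fun r => f r * r ^ δ)
      (f' * r₀ ^ δ + f r₀ * (δ * r₀ ^ (δ - 1))) r₀ := hF.mul hpow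
  have heq : f' * r₀ ^ δ + f r₀ * (δ * r₀ ^ (δ - 1)) = 0 := by
    rw [← h1.deriv]; exact h
  -- derivative of the target function
  have h2 : HasDerivAt (fun r => r ^ δ * (1 - ω ^ 2 * f r * r ^ (-2 : ℝ)))
      (δ * r₀ ^ (δ - 1) * (1 - ω ^ 2 * f r₀ * r₀ ^ (-2 : ℝ)) +
        r₀ ^ δ * (0 - ((0 * f r₀ + ω ^ 2 * f') * r₀ ^ (-2 : ℝ) +
          ω ^ 2 * f r₀ * ((-2) * r₀ ^ ((-2 : ℝ) - 1))))) r₀ := by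
    exact hpow.mul ((hasDerivAt_const r₀ (1 : ℝ)).sub
      (((hasDerivAt_const r₀ (ω ^ 2)).mul hF).mul hpow2))
  have hd := h2.deriv
  -- rpow identities
  have e1 : r₀ ^ δ = r₀ ^ (δ - 1) * r₀ := by
    rw [← Real.rpow_add_one hr0]; ring_nf
  have e2 : r₀ ^ ((-2 : ℝ) - 1) * r₀ = r₀ ^ (-2 : ℝ) := by
    rw [← Real.rpow_add_one hr0]; norm_num
  constructor
  · rw [hd]
    have hA : 0 < r₀ ^ (δ - 1) := Real.rpow_pos_of_pos hr _
    have heq' : f' * (r₀ ^ (δ - 1) * r₀) + f r₀ * (δ * r₀ ^ (δ - 1)) = 0 := by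
      rw [← e1]; exact heq
    -- from heq': f' * r₀ = -δ * f r₀
    have hfr : f' * r₀ = -δ * f r₀ := by
      have h0 : r₀ ^ (δ - 1) * (f' * r₀ + δ * f r₀) = 0 := by linear_combination heq'
      rcases mul_eq_zero.mp h0 with h' | h'
      · exact absurd h' (ne_of_gt hA)
      · linarith
    have e3 : r₀ ^ ((-2:ℝ) - 1) = r₀ ^ (-2:ℝ) / r₀ := by
      field_simp [← e2]
      exact e2
    rw [e1, e3]
    linear_combination (-(r₀ ^ (δ - 1)) * ω ^ 2 * r₀ ^ (-2:ℝ)) * hfr +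
      (r₀ ^ (δ - 1) * ω ^ 2 * f r₀ * r₀ ^ (-2:ℝ) * 2) * (mul_inv_cancel₀ hr0)
  · have hA : 0 < r₀ ^ (δ - 1) := Real.rpow_pos_of_pos hr _
    have hB : 0 < r₀ ^ (-2 : ℝ) := Real.rpow_pos_of_pos hr _
    have := hfpos r₀
    positivity
end
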